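/- Let g : ℝ → ℝ be a bounded continuous function with |g(t)| ≤ K for all t, and suppose |g(t)| ≤ M(e^{v|t|} − 1)e^{-μl} for |t| ≤ μl/(2v), where K, M, v, μ, l > 0. Then ∫_{-∞}^{∞} (|g(t)|/max(|t|, η))·e^{-t²} dt ≤ C(M e^{-μl/2} + K e^{-(μl/(2v))²}/(μl/(2v))) for any fixed η ∈ (0,1], where C depends only on μ, v, η. -/

import Mathlib

open MeasureTheory

/-- abstract estimate for the first term: if `|g| ≤ K` everywhere and
`|g(t)| ≤ M(e^{v|t|}-1)e^{-μl}` for `|t| ≤ μl/(2v)`, then for any `η ∈ (0,1]`,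
`∫ (|g(t)|/max(|t|,η)) e^{-t²} dt ≤ C (M e^{-μl/2} + K e^{-(μl/(2v))²}/(μl/(2v)))`,
with `C` depending only on `μ, v, η`. -/
theorem stmt_13 (μ v η : ℝ) (hμ : 0 < μ) (hv : 0 < v) (hη : 0 < η) (hη1 : η ≤ 1) :
    ∃ C : ℝ, ∀ (K M l : ℝ) (g : ℝ → ℝ), 0 < K → 0 < M → 0 < l →
      Continuous g → (∀ t : ℝ, |g t| ≤ K) →
      (∀ t : ℝ, |t| ≤ μ * l / (2 * v) →
        |g t| ≤ M * (Real.exp (v * |t|) - 1) * Real.exp (-μ * l)) →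
      (∫ t : ℝ, (|g t| / max |t| η) * Real.exp (-t ^ 2)) ≤
        C * (M * Real.exp (-μ * l / 2) +
          K * Real.exp (-(μ * l / (2 * v)) ^ 2) / (μ * l / (2 * v))) := by
  refine ⟨2 / η, fun K M l g hK hM hl hgc hgK hgM => ?_⟩
  set a : ℝ := μ * l / (2 * v) with ha_def
  have ha : 0 < a := by positivity
  set f : ℝ → ℝ := fun t => |g t| / max |t| η * Real.exp (-t ^ 2) with hf_def
  have hmaxpos : ∀ t : ℝ, 0 < max |t| η := fun t => lt_of_lt_of_le hη (le_max_right _ _)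
  have hf_nonneg : ∀ t, 0 ≤ f t := fun t => by
    have := (hmaxpos t).le
    positivity
  -- continuity
  have hfc : Continuous f := by
    apply Continuous.mul
    · exact (continuous_abs.comp hgc).div (continuous_abs.max continuous_const)
        (fun t => (hmaxpos t).ne')
    · exact Real.continuous_exp.comp (continuous_pow 2).neg
  -- integrability of the Gaussian
  have hgauss : Integrable (fun t : ℝ => Real.exp (-t ^ 2)) := by
    have := integrable_exp_neg_mul_sq (b := 1) one_pos
    simpa using this
  -- global bound f ≤ (K/η) e^{-t²}
  have hfK : ∀ t, f t ≤ K / η * Real.exp (-t ^ 2) := by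
    intro t
    apply mul_le_mul_of_nonneg_right _ (Real.exp_pos _).le
    rw [div_le_div_iff₀ (hmaxpos t) hη]
    calc |g t| * η ≤ K * η := by
          exact mul_le_mul_of_nonneg_right (hgK t) hη.le
      _ ≤ K * max |t| η := by
          exact mul_le_mul_of_nonneg_left (le_max_right _ _) hK.le
  have hfint : Integrable f := by
    refine (hgauss.const_mul (K / η)).mono' hfc.aestronglyMeasurable ?_
    filter_upwards with t
    rw [Real.norm_eq_abs, abs_of_nonneg (hf_nonneg t)]
    exact hfK t
  -- tail exponential integral
  have htail_int : ∀ h : ℝ → ℝ, Continuous h → (∀ t ∈ Set.Ioi a, h t ≤ K / η * Real.exp (-(a * t)))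
      → IntegrableOn h (Set.Ioi a) → (∫ t in Set.Ioi a, h t) ≤ K / η * (a⁻¹ * Real.exp (-a ^ 2)) := by
    intro h _ hb hint
    have hexp_int : IntegrableOn (fun t : ℝ => K / η * Real.exp (-(a * t))) (Set.Ioi a) := by
      have := (exp_neg_integrableOn_Ioi a ha).const_mul (K / η)
      simp only [neg_mul] at this; exact this
    have hmono := setIntegral_mono_on hint hexp_int measurableSet_Ioi hb
    have hcomp : (∫ t in Set.Ioi a, Real.exp (-(a * t))) = a⁻¹ * Real.exp (-a ^ 2) := by
      have := integral_comp_mul_left_Ioi (fun x : ℝ => Real.exp (-x)) a (b := a) ha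
      rw [this, smul_eq_mul, integral_exp_neg_Ioi]
      ring_nf
    calc (∫ t in Set.Ioi a, h t) ≤ ∫ t in Set.Ioi a, K / η * Real.exp (-(a * t)) := hmono
      _ = K / η * ∫ t in Set.Ioi a, Real.exp (-(a * t)) := by rw [integral_const_mul]
      _ = K / η * (a⁻¹ * Real.exp (-a ^ 2)) := by rw [hcomp]
  -- pointwise bound on the tail
  have hptail : ∀ t : ℝ, a ≤ |t| → f t ≤ K / η * Real.exp (-(a * |t|)) := by
    intro t hat
    refine le_trans (hfK t) ?_
    apply mul_le_mul_of_nonneg_left _ (by positivity)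
    apply Real.exp_le_exp.2
    have : a * |t| ≤ t ^ 2 := by
      have h1 : a * |t| ≤ |t| * |t| := mul_le_mul_of_nonneg_right hat (abs_nonneg t)
      calc a * |t| ≤ |t| * |t| := h1
        _ = t ^ 2 := by rw [abs_mul_abs_self t]; ring
    linarith
  -- positive tail
  have hpos_tail : (∫ t in Set.Ioi a, f t) ≤ K / η * (a⁻¹ * Real.exp (-a ^ 2)) := by
    apply htail_int f hfc _ hfint.integrableOn
    intro t ht
    have hta : a < t := ht
    have habs : |t| = t := abs_of_pos (ha.trans hta)
    have := hptail t (by rw [habs]; exact hta.le)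
    rwa [habs] at this
  -- negative tail
  have hneg_tail : (∫ t in Set.Iic (-a), f t) ≤ K / η * (a⁻¹ * Real.exp (-a ^ 2)) := by
    have hswap : (∫ t in Set.Iic (-a), f t) = ∫ t in Set.Ioi a, f (-t) := by
      rw [integral_comp_neg_Ioi]
    rw [hswap]
    apply htail_int (fun t => f (-t)) (hfc.comp continuous_neg) _
      (hfint.comp_neg.integrableOn)
    intro t ht
    have hta : a < t := ht
    have habs : |(-t)| = t := by rw [abs_neg]; exact abs_of_pos (ha.trans hta)
    have := hptail (-t) (by rw [habs]; exact hta.le)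
    rwa [habs] at this
  -- inner region
  have hinner : (∫ t in Set.Ioc (-a) a, f t) ≤
      M * Real.exp (-μ * l / 2) / η * Real.sqrt Real.pi := by
    have hbd : ∀ t ∈ Set.Ioc (-a) a, f t ≤
        M * Real.exp (-μ * l / 2) / η * Real.exp (-t ^ 2) := by
      intro t ht
      have habs : |t| ≤ a := abs_le.2 ⟨ht.1.le, ht.2⟩
      have hg1 : |g t| ≤ M * Real.exp (-μ * l / 2) := by
        have h1 := hgM t habs
        have h2 : Real.exp (v * |t|) - 1 ≤ Real.exp (v * a) := by
          have : Real.exp (v * |t|) ≤ Real.exp (v * a) :=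
            Real.exp_le_exp.2 (mul_le_mul_of_nonneg_left habs hv.le)
          linarith
        have hva : v * a = μ * l / 2 := by
          rw [ha_def]; field_simp
        calc |g t| ≤ M * (Real.exp (v * |t|) - 1) * Real.exp (-μ * l) := h1
          _ ≤ M * Real.exp (v * a) * Real.exp (-μ * l) := by
              apply mul_le_mul_of_nonneg_right _ (Real.exp_pos _).le
              exact mul_le_mul_of_nonneg_left h2 hM.le
          _ = M * Real.exp (-μ * l / 2) := by
              rw [mul_assoc, ← Real.exp_add, hva]; ring_nf
      apply mul_le_mul_of_nonneg_right _ (Real.exp_pos _).le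
      rw [div_le_div_iff₀ (hmaxpos t) hη]
      calc |g t| * η ≤ M * Real.exp (-μ * l / 2) * η :=
            mul_le_mul_of_nonneg_right hg1 hη.le
        _ ≤ M * Real.exp (-μ * l / 2) * max |t| η :=
            mul_le_mul_of_nonneg_left (le_max_right _ _) (by positivity)
    have hbint : Integrable (fun t : ℝ => M * Real.exp (-μ * l / 2) / η * Real.exp (-t ^ 2)) :=
      hgauss.const_mul _
    calc (∫ t in Set.Ioc (-a) a, f t)
        ≤ ∫ t in Set.Ioc (-a) a, M * Real.exp (-μ * l / 2) / η * Real.exp (-t ^ 2) :=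
          setIntegral_mono_on hfint.integrableOn hbint.integrableOn measurableSet_Ioc hbd
      _ ≤ ∫ t : ℝ, M * Real.exp (-μ * l / 2) / η * Real.exp (-t ^ 2) := by
          apply setIntegral_le_integral hbint
          filter_upwards with t
          positivity
      _ = M * Real.exp (-μ * l / 2) / η * Real.sqrt Real.pi := by
          rw [integral_const_mul]
          congr 1
          have := integral_gaussian 1
          simpa using this
  -- combine
  have hsplit : (∫ t : ℝ, f t) = (∫ t in Set.Iic (-a), f t) + (∫ t in Set.Ioi a, f t)
      + ∫ t in Set.Ioc (-a) a, f t := by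
    have hu : MeasurableSet (Set.Iic (-a) ∪ Set.Ioi a) :=
      measurableSet_Iic.union measurableSet_Ioi
    have hcompl : (Set.Iic (-a) ∪ Set.Ioi a)ᶜ = Set.Ioc (-a) a := by
      rw [Set.compl_union, Set.compl_Iic, Set.compl_Ioi, Set.Ioi_inter_Iic]
    have h1 := integral_add_compl hu hfint
    have h2 : (∫ t in Set.Iic (-a) ∪ Set.Ioi a, f t)
        = (∫ t in Set.Iic (-a), f t) + ∫ t in Set.Ioi a, f t := by
      apply setIntegral_union _ measurableSet_Ioi hfint.integrableOn hfint.integrableOn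
      exact Set.Iic_disjoint_Ioi (le_of_lt (by linarith : -a < a))
    rw [hcompl, h2] at h1
    linarith [h1]
  have hsqrtpi : Real.sqrt Real.pi ≤ 2 := by
    have h4 : Real.sqrt Real.pi ≤ Real.sqrt 4 := Real.sqrt_le_sqrt (by linarith [Real.pi_le_four])
    have h42 : Real.sqrt 4 = 2 := by
      rw [show (4 : ℝ) = 2 ^ 2 by norm_num]
      exact Real.sqrt_sq (by norm_num)
    linarith
  have hfinal : (∫ t : ℝ, f t) ≤
      2 / η * (M * Real.exp (-μ * l / 2) + K * Real.exp (-a ^ 2) / a) := by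
    rw [hsplit]
    have e1 : K / η * (a⁻¹ * Real.exp (-a ^ 2)) = 1 / η * (K * Real.exp (-a ^ 2) / a) := by
      field_simp
    have hM2 : M * Real.exp (-μ * l / 2) / η * Real.sqrt Real.pi
        ≤ 2 / η * (M * Real.exp (-μ * l / 2)) := by
      rw [div_mul_eq_mul_div, div_mul_eq_mul_div, div_le_div_iff₀ hη hη]
      nlinarith [mul_nonneg (mul_nonneg (mul_nonneg hM.le (Real.exp_pos (-μ * l / 2)).le)
        (by linarith : (0:ℝ) ≤ 2 - Real.sqrt Real.pi)) hη.le]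
    have hK2 : K / η * (a⁻¹ * Real.exp (-a ^ 2)) + K / η * (a⁻¹ * Real.exp (-a ^ 2))
        ≤ 2 / η * (K * Real.exp (-a ^ 2) / a) := by
      rw [e1, ← two_mul]
      apply le_of_eq
      ring
    have := add_le_add (add_le_add hneg_tail hpos_tail) hinner
    rw [mul_add]
    linarith [hM2, hK2]
  calc (∫ t : ℝ, |g t| / max |t| η * Real.exp (-t ^ 2)) = ∫ t : ℝ, f t := rfl
    _ ≤ 2 / η * (M * Real.exp (-μ * l / 2) + K * Real.exp (-a ^ 2) / a) := hfinal
    _ = 2 / η * (M * Real.exp (-μ * l / 2) + K * Real.exp (-(μ * l / (2 * v)) ^ 2) / (μ * l / (2 * v))) := by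
        rw [ha_def]
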